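/- Let v : ℝ³ → ℝ³ be a continuously differentiable vector field and let p, q : ℝ³ → ℝ be continuously differentiable with compact support. Then ∫_{ℝ³} q(x) ( v(x)·∇p(x) + div(v p)(x) ) dx = − ∫_{ℝ³} p(x) ( v(x)·∇q(x) + div(v q)(x) ) dx; i.e., the convection operator p ↦ v·∇p + div(vp) is antisymmetric with respect to the L² inner product on compactly supported functions. -/

import Mathlib

open MeasureTheory

set_option maxHeartbeats 1000000

noncomputable section

/-- The spatial state space `ℝ³`. -/
abbrev E3 : Type := EuclideanSpace ℝ (Fin 3)

/-- The `j`-th partial derivative of a scalar function on `ℝ³`. -/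
def pd (j : Fin 3) (p : E3 → ℝ) (x : E3) : ℝ :=
  fderiv ℝ p x (EuclideanSpace.single j 1)

/-- The divergence `div v = ∑ⱼ ∂vⱼ/∂xⱼ` of a vector field `v : ℝ³ → ℝ³`. -/
def div3 (v : E3 → E3) (x : E3) : ℝ :=
  ∑ j : Fin 3, fderiv ℝ v x (EuclideanSpace.single j 1) j

/-- The convection operator `p ↦ v·∇p + div(vp)`. -/
def convOp (v : E3 → E3) (p : E3 → ℝ) (x : E3) : ℝ :=
  (∑ j : Fin 3, v x j * pd j p x) + div3 (fun y => p y • v y) x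

lemma pd_continuous (j : Fin 3) (p : E3 → ℝ) (hp : ContDiff ℝ 1 p) :
    Continuous (pd j p) :=
  (ContinuousLinearMap.apply ℝ ℝ (EuclideanSpace.single j 1)).continuous.comp
    (hp.continuous_fderiv one_ne_zero)

lemma pd_hasCompactSupport (j : Fin 3) (f : E3 → ℝ) (hfc : HasCompactSupport f) :
    HasCompactSupport (pd j f) :=
  hfc.fderiv_apply ℝ (EuclideanSpace.single j 1)

lemma fderiv_apply_continuous (v : E3 → E3) (hv : ContDiff ℝ 1 v) (j : Fin 3) :
    Continuous (fun x => fderiv ℝ v x (EuclideanSpace.single j 1) j) :=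
  (PiLp.continuous_apply 2 _ j).comp
    ((ContinuousLinearMap.apply ℝ E3 (EuclideanSpace.single j 1)).continuous.comp
      (hv.continuous_fderiv one_ne_zero))

lemma div3_continuous (v : E3 → E3) (hv : ContDiff ℝ 1 v) :
    Continuous (div3 v) := by
  unfold div3
  exact continuous_finset_sum _ (fun j _ => fderiv_apply_continuous v hv j)

lemma contDiff_coord (v : E3 → E3) (hv : ContDiff ℝ 1 v) (j : Fin 3) :
    ContDiff ℝ 1 (fun y => v y j) :=
  (ContinuousLinearMap.proj (R := ℝ) (φ := fun _ : Fin 3 => ℝ) j).contDiff.comp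
    ((PiLp.continuousLinearEquiv 2 ℝ (fun _ : Fin 3 => ℝ)).contDiff.comp hv)

lemma fderiv_coord (v : E3 → E3) (hv : ContDiff ℝ 1 v) (j : Fin 3) (x u : E3) :
    fderiv ℝ (fun y => v y j) x u = fderiv ℝ v x u j := by
  have h : fderiv ℝ (fun y => v y j) x
      = (EuclideanSpace.proj (𝕜 := ℝ) j).comp (fderiv ℝ v x) :=
    ((EuclideanSpace.proj (𝕜 := ℝ) j).hasFDerivAt.comp x
      (hv.differentiable one_ne_zero x).hasFDerivAt).fderiv
  rw [h]
  rfl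

/-- Leibniz rule for the divergence: `div (f • v) = v·∇f + f div v`. -/
lemma div3_smul (f : E3 → ℝ) (v : E3 → E3) (x : E3)
    (hf : DifferentiableAt ℝ f x) (hv : DifferentiableAt ℝ v x) :
    div3 (fun y => f y • v y) x
      = (∑ j : Fin 3, v x j * pd j f x) + f x * div3 v x := by
  unfold div3 pd
  rw [Finset.mul_sum, ← Finset.sum_add_distrib]
  refine Finset.sum_congr rfl (fun j _ => ?_)
  rw [fderiv_fun_smul hf hv]
  simp
  ring


lemma hcs_mul_left {f g : E3 → ℝ} (hfc : HasCompactSupport f) :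
    HasCompactSupport (fun x => f x * g x) :=
  hfc.mono' (fun x hx => subset_closure (fun h => hx (by simp [Function.mem_support.1, h])))

lemma hcs_mul_right {f g : E3 → ℝ} (hgc : HasCompactSupport g) :
    HasCompactSupport (fun x => f x * g x) :=
  hgc.mono' (fun x hx => subset_closure (fun h => hx (by simp [h])))

/-- Integral of the divergence of a compactly supported `C¹` vector field vanishes. -/
lemma integral_div3_smul_eq_zero (f : E3 → ℝ) (v : E3 → E3)
    (hf : ContDiff ℝ 1 f) (hfc : HasCompactSupport f) (hv : ContDiff ℝ 1 v) :
    ∫ x : E3, div3 (fun y => f y • v y) x = 0 := by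
  have hint1 : ∀ j : Fin 3, Integrable (fun x => pd j f x * v x j) :=
    fun j => ((pd_continuous j f hf).mul
      ((PiLp.continuous_apply 2 _ j).comp hv.continuous)).integrable_of_hasCompactSupport
      (hcs_mul_left (pd_hasCompactSupport j f hfc))
  have hint2 : ∀ j : Fin 3, Integrable (fun x => f x * pd j (fun y => v y j) x) :=
    fun j => (hf.continuous.mul
      (pd_continuous j _ (contDiff_coord v hv j))).integrable_of_hasCompactSupport
      (hcs_mul_left hfc)
  have hint3 : ∀ j : Fin 3, Integrable (fun x => f x * v x j) :=
    fun j => (hf.continuous.mul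
      ((PiLp.continuous_apply 2 _ j).comp hv.continuous)).integrable_of_hasCompactSupport (hcs_mul_left hfc)
  have key : ∀ j : Fin 3,
      (∫ x : E3, f x * pd j (fun y => v y j) x) = - ∫ x : E3, pd j f x * v x j :=
    fun j => integral_mul_fderiv_eq_neg_fderiv_mul_of_integrable
      (hint1 j) (hint2 j) (hint3 j)
      (fun x _ => hf.differentiable one_ne_zero x) (fun x _ => (contDiff_coord v hv j).differentiable one_ne_zero x)
  have hexp : ∀ x : E3, div3 (fun y => f y • v y) x
      = ∑ j : Fin 3, (pd j f x * v x j + f x * pd j (fun y => v y j) x) := by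
    intro x
    rw [div3_smul f v x (hf.differentiable one_ne_zero x) (hv.differentiable one_ne_zero x)]
    unfold div3
    rw [Finset.sum_add_distrib, Finset.mul_sum]
    congr 1
    · exact Finset.sum_congr rfl (fun j _ => mul_comm _ _)
    · exact Finset.sum_congr rfl (fun j _ => by
        rw [show pd j (fun y => v y j) x = fderiv ℝ v x (EuclideanSpace.single j 1) j from
          fderiv_coord v hv j x _])
  simp only [hexp]
  rw [integral_finset_sum (f := fun (j : Fin 3) x => pd j f x * v x j + f x * pd j (fun y => v y j) x) Finset.univ (fun j _ => (hint1 j).add (hint2 j))]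
  refine Finset.sum_eq_zero (fun j _ => ?_)
  rw [integral_add (hint1 j) (hint2 j), key j]
  ring

/-- Pointwise identity: `q·(conv p) + p·(conv q) = 2 div ((p q) • v)`. -/
lemma conv_pointwise (v : E3 → E3) (hv : ContDiff ℝ 1 v)
    (p q : E3 → ℝ) (hp : ContDiff ℝ 1 p) (hq : ContDiff ℝ 1 q) (x : E3) :
    q x * convOp v p x + p x * convOp v q x
      = 2 * div3 (fun y => (p y * q y) • v y) x := by
  have hpd : ∀ j : Fin 3, pd j (fun y => p y * q y) x
      = pd j p x * q x + p x * pd j q x := by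
    intro j
    unfold pd
    rw [fderiv_fun_mul (hp.differentiable one_ne_zero x) (hq.differentiable one_ne_zero x)]
    simp
    ring
  rw [div3_smul (fun y => p y * q y) v x ((hp.differentiable one_ne_zero x).mul (hq.differentiable one_ne_zero x))
      (hv.differentiable one_ne_zero x),
    convOp, convOp,
    div3_smul p v x (hp.differentiable one_ne_zero x) (hv.differentiable one_ne_zero x),
    div3_smul q v x (hq.differentiable one_ne_zero x) (hv.differentiable one_ne_zero x)]
  simp only [hpd, Fin.sum_univ_three]
  ring

/-- **Antisymmetry of the convection operator.**
For a `C¹` vector field `v` and compactly supported `C¹` functions `p, q` on `ℝ³`,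
`∫ q (v·∇p + div(vp)) = -∫ p (v·∇q + div(vq))`; i.e. the convection operator is
antisymmetric with respect to the `L²` inner product. -/
theorem convection_antisymmetric
    (v : E3 → E3) (hv : ContDiff ℝ 1 v)
    (p q : E3 → ℝ) (hp : ContDiff ℝ 1 p) (hq : ContDiff ℝ 1 q)
    (hpc : HasCompactSupport p) (hqc : HasCompactSupport q) :
    (∫ x : E3, q x * convOp v p x) = -∫ x : E3, p x * convOp v q x := by
  have hconvCont : ∀ (r : E3 → ℝ), ContDiff ℝ 1 r → Continuous (convOp v r) := by
    intro r hr
    unfold convOp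
    exact (continuous_finset_sum _ (fun j _ =>
      ((PiLp.continuous_apply 2 _ j).comp hv.continuous).mul (pd_continuous j r hr))).add
      (div3_continuous _ (hr.smul hv))
  have hint1 : Integrable (fun x => q x * convOp v p x) :=
    (hq.continuous.mul (hconvCont p hp)).integrable_of_hasCompactSupport (hcs_mul_left hqc)
  have hint2 : Integrable (fun x => p x * convOp v q x) :=
    (hp.continuous.mul (hconvCont q hq)).integrable_of_hasCompactSupport (hcs_mul_left hpc)
  have hsum : (∫ x : E3, q x * convOp v p x) + ∫ x : E3, p x * convOp v q x = 0 := by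
    rw [← integral_add hint1 hint2]
    have : (∫ x : E3, (q x * convOp v p x + p x * convOp v q x))
        = ∫ x : E3, 2 * div3 (fun y => (p y * q y) • v y) x := by
      congr 1
      ext x
      exact conv_pointwise v hv p q hp hq x
    rw [this, integral_const_mul,
      integral_div3_smul_eq_zero (fun y => p y * q y) v (hp.mul hq) (hcs_mul_left hpc) hv,
      mul_zero]
  linarith
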